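/- The free-fermion container algebra g_large: let m, M ∈ ℕ with m ≥ 1 and let v : Fin m → Fin M be injective. Let T_v be the set of M-qubit Pauli strings T_v = {→X_{v(k)}X_{v(l)} : k ≠ l} ∪ {→Y_{v(k)}Y_{v(l)} : k ≠ l} ∪ {→X_{v(k)}Y_{v(l)} : k ≠ l} ∪ {Z_{v(k)} : k ∈ Fin m}. Then the ℝ-linear span of {Complex.I • P(t) : t ∈ T_v} is closed under the commutator bracket (hence is a Lie ℝ-subalgebra of the M-qubit complex matrices), and its ℝ-dimension equals m(2m−1). -/

import Mathlib

open Matrix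

attribute [local instance 100] LieRing.ofAssociativeRing

/-- The four 2×2 Pauli matrices: identity, X, Y, Z. -/
noncomputable def pauli : Fin 4 → Matrix (Fin 2) (Fin 2) ℂ
  | 0 => 1
  | 1 => !![0, 1; 1, 0]
  | 2 => !![0, -Complex.I; Complex.I, 0]
  | 3 => !![1, 0; 0, -1]

/-- The matrix of an `n`-qubit Pauli string `p : Fin n → Fin 4`,
the Kronecker product of the `pauli (p i)`. -/
noncomputable def PauliMat {n : ℕ} (p : Fin n → Fin 4) :
    Matrix (Fin n → Fin 2) (Fin n → Fin 2) ℂ :=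
  Matrix.of fun x y => ∏ i, pauli (p i) (x i) (y i)

/-- The Hamiltonian algebra of a set of Pauli strings: the Lie ℝ-subalgebra of the
complex matrices generated by `{I • P(p) : p ∈ S}`. -/
noncomputable def hamAlg {n : ℕ} (S : Set (Fin n → Fin 4)) :
    LieSubalgebra ℝ (Matrix (Fin n → Fin 2) (Fin n → Fin 2) ℂ) :=
  LieSubalgebra.lieSpan ℝ _ ((fun p => Complex.I • PauliMat p) '' S)

/-- The Pauli string `→A_iB_j`: letter `A` at `i`, letter `B` at `j`, `Z` strictly
between `i` and `j`, identity elsewhere. -/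
def ladderString {n : ℕ} (i j : Fin n) (A B : Fin 4) : Fin n → Fin 4 :=
  fun k => if k = i then A else if k = j then B
    else if min i j < k ∧ k < max i j then 3 else 0

/-- The Pauli string `Z_kZ_l`. -/
def zzString {n : ℕ} (k l : Fin n) : Fin n → Fin 4 :=
  fun m => if m = k ∨ m = l then 3 else 0

/-- The Pauli string `Z_k`. -/
def zString {n : ℕ} (k : Fin n) : Fin n → Fin 4 :=
  fun m => if m = k then 3 else 0

/-- A choice of letter: `X` if `c = 0`, `Y` if `c = 1`. -/
def ltr (c : Fin 2) : Fin 4 := if c = 0 then 1 else 2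

/-- The opposite letter: `Y` if `c = 0`, `X` if `c = 1`. -/
def ltrBar (c : Fin 2) : Fin 4 := if c = 0 then 2 else 1

/-- Pauli strings of the Jordan–Wigner transformed hopping terms of one spin species,
with sites embedded via `v : Fin N → Fin (2N)` and hoppings on the edges of `G`. -/
def Sspin {N : ℕ} (G : SimpleGraph (Fin N)) (v : Fin N → Fin (2 * N)) :
    Set (Fin (2 * N) → Fin 4) :=
  {p | ∃ k l : Fin N, G.Adj k l ∧
    (p = ladderString (v k) (v l) 1 1 ∨ p = ladderString (v k) (v l) 2 2)}

/-- Pauli strings of the Jordan–Wigner transformed free fermion model. -/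
def Sfree {N : ℕ} (G : SimpleGraph (Fin N)) (u d : Fin N → Fin (2 * N)) :
    Set (Fin (2 * N) → Fin 4) :=
  Sspin G u ∪ Sspin G d

/-- Pauli strings of the model with a single on-site Coulomb interaction at fermion
site `i0` (interaction term `Z_{u i0} Z_{d i0}`). -/
def Sint {N : ℕ} (G : SimpleGraph (Fin N)) (u d : Fin N → Fin (2 * N)) (i0 : Fin N) :
    Set (Fin (2 * N) → Fin 4) :=
  Sfree G u d ∪ {zzString (u i0) (d i0)}

/-- The container set T_v of Pauli strings for the free-fermion algebra:
`→X_{v k}X_{v l}`, `→Y_{v k}Y_{v l}`, `→X_{v k}Y_{v l}` (all ordered pairs `k ≠ l`,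
which also yields the `YX` strings), and `Z_{v k}`. -/
def Tset {m M : ℕ} (v : Fin m → Fin M) : Set (Fin M → Fin 4) :=
  {t | ∃ k l : Fin m, k ≠ l ∧
      (t = ladderString (v k) (v l) 1 1 ∨ t = ladderString (v k) (v l) 2 2 ∨
       t = ladderString (v k) (v l) 1 2)} ∪
  {t | ∃ k : Fin m, t = zString (v k)}

/-! ### Single-qubit Pauli multiplication table -/

/-- Index of the product of two Pauli matrices. -/
def pmul : Fin 4 → Fin 4 → Fin 4
  | 0, b => b
  | 1, 0 => 1 | 1, 1 => 0 | 1, 2 => 3 | 1, 3 => 2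
  | 2, 0 => 2 | 2, 1 => 3 | 2, 2 => 0 | 2, 3 => 1
  | 3, 0 => 3 | 3, 1 => 2 | 3, 2 => 1 | 3, 3 => 0

/-- Phase of the product of two Pauli matrices. -/
noncomputable def pcoef : Fin 4 → Fin 4 → ℂ
  | 1, 2 => Complex.I
  | 1, 3 => -Complex.I
  | 2, 1 => -Complex.I
  | 2, 3 => Complex.I
  | 3, 1 => Complex.I
  | 3, 2 => -Complex.I
  | _, _ => 1

lemma pauli_mul (a b : Fin 4) : pauli a * pauli b = pcoef a b • pauli (pmul a b) := by
  fin_cases a <;> fin_cases b <;>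
    · ext i j
      fin_cases i <;> fin_cases j <;>
        (simp [pauli, pmul, pcoef, Matrix.mul_apply, Matrix.one_apply, Fin.sum_univ_succ,
          Complex.I_sq]; try ring_nf)

lemma PauliMat_mul {n : ℕ} (p q : Fin n → Fin 4) :
    PauliMat p * PauliMat q =
      (∏ i, pcoef (p i) (q i)) • PauliMat (fun i => pmul (p i) (q i)) := by
  ext x y
  simp only [PauliMat, Matrix.mul_apply, Matrix.smul_apply, Matrix.of_apply, smul_eq_mul]
  have h1 : ∀ z : Fin n → Fin 2,
      (∏ i, pauli (p i) (x i) (z i)) * ∏ i, pauli (q i) (z i) (y i)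
      = ∏ i, (pauli (p i) (x i) (z i) * pauli (q i) (z i) (y i)) := fun z =>
    (Finset.prod_mul_distrib).symm
  simp only [h1]
  rw [← Fintype.piFinset_univ,
    ← Finset.prod_univ_sum (fun _ : Fin n => (Finset.univ : Finset (Fin 2)))
      (fun i zi => pauli (p i) (x i) zi * pauli (q i) zi (y i))]
  have h2 : ∀ i, (∑ zi : Fin 2, pauli (p i) (x i) zi * pauli (q i) zi (y i))
      = pcoef (p i) (q i) * pauli (pmul (p i) (q i)) (x i) (y i) := by
    intro i
    have := congrFun (congrFun (pauli_mul (p i) (q i)) (x i)) (y i)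
    simpa [Matrix.mul_apply] using this
  rw [Finset.prod_congr rfl (fun i _ => h2 i), Finset.prod_mul_distrib]

lemma PauliMat_one {n : ℕ} : PauliMat (fun _ : Fin n => (0 : Fin 4)) = 1 := by
  ext x y
  by_cases h : x = y
  · subst h; simp [PauliMat, pauli, Matrix.one_apply]
  · obtain ⟨i, hi⟩ := Function.ne_iff.mp h
    rw [PauliMat, Matrix.of_apply, Finset.prod_eq_zero (Finset.mem_univ i)]
    · simp [Matrix.one_apply, h]
    · simp [pauli, Matrix.one_apply, hi]

lemma trace_pauli (a : Fin 4) : Matrix.trace (pauli a) = if a = 0 then 2 else 0 := by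
  fin_cases a <;> simp [pauli, Matrix.trace_fin_two]

lemma trace_PauliMat {n : ℕ} (p : Fin n → Fin 4) :
    Matrix.trace (PauliMat p) = ∏ i, Matrix.trace (pauli (p i)) := by
  simp only [Matrix.trace, Matrix.diag, PauliMat, Matrix.of_apply]
  rw [← Fintype.piFinset_univ,
    ← Finset.prod_univ_sum (fun _ : Fin n => (Finset.univ : Finset (Fin 2)))
      (fun i zi => pauli (p i) zi zi)]

lemma trace_PauliMat_mul {n : ℕ} (p q : Fin n → Fin 4) :
    Matrix.trace (PauliMat p * PauliMat q) = if p = q then (2 ^ n : ℂ) else 0 := by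
  rw [PauliMat_mul, Matrix.trace_smul, trace_PauliMat]
  by_cases h : p = q
  · subst h
    have h0 : ∀ a : Fin 4, pmul a a = 0 := by decide
    have hc : ∀ a : Fin 4, pcoef a a = 1 := by
      intro a; fin_cases a <;> rfl
    simp [h0, hc, trace_pauli]
  · obtain ⟨i, hi⟩ := Function.ne_iff.mp h
    have hne : ∀ a b : Fin 4, a ≠ b → pmul a b ≠ 0 := by decide
    have hz : Matrix.trace (pauli (pmul (p i) (q i))) = 0 := by
      rw [trace_pauli, if_neg (hne _ _ hi)]
    rw [if_neg h, Finset.prod_eq_zero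
      (f := fun i => Matrix.trace (pauli (pmul (p i) (q i)))) (Finset.mem_univ i) hz,
      smul_zero]

lemma pauliIndep (n : ℕ) :
    LinearIndependent ℝ (fun t : (Fin n → Fin 4) => Complex.I • PauliMat t) := by
  rw [Fintype.linearIndependent_iff]
  intro g hg s
  have h := congrArg (fun A => Matrix.trace (PauliMat s * A)) hg
  simp only [Matrix.mul_sum, Matrix.trace_sum, Matrix.mul_smul, Matrix.trace_smul,
    trace_PauliMat_mul, Matrix.mul_zero, Matrix.trace_zero, smul_ite, smul_zero,
    Finset.sum_ite_eq, Finset.mem_univ, if_true] at h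
  have h2 : g s • (Complex.I • (2 ^ n : ℂ)) = 0 := h
  have h3 : (Complex.I • (2 ^ n : ℂ)) ≠ 0 := by
    simp [Complex.I_ne_zero]
  rcases smul_eq_zero.mp h2 with h4 | h4
  · exact h4
  · exact absurd h4 h3

/-! ### Jordan–Wigner Majorana strings -/

/-- The Jordan–Wigner Majorana string: `Z` left of `v k`, letter `ltr α` at `v k`. -/
def gStr {m M : ℕ} (v : Fin m → Fin M) (k : Fin m) (α : Fin 2) : Fin M → Fin 4 :=
  fun j => if j = v k then ltr α else if j < v k then 3 else 0

/-- The Majorana operator. -/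
noncomputable def Gam {m M : ℕ} (v : Fin m → Fin M) (a : Fin m × Fin 2) :
    Matrix (Fin M → Fin 2) (Fin M → Fin 2) ℂ :=
  PauliMat (gStr v a.1 a.2)

/-- The Pauli string of a quadratic product of Majoranas. -/
def mStr {m M : ℕ} (v : Fin m → Fin M) (a b : Fin m × Fin 2) : Fin M → Fin 4 :=
  if a.1 = b.1 then zString (v a.1)
  else if v a.1 < v b.1 then ladderString (v a.1) (v b.1) (ltrBar a.2) (ltr b.2)
  else ladderString (v a.1) (v b.1) (ltr a.2) (ltrBar b.2)

/-- The sign of a quadratic product of Majoranas. -/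
def mSgn {m M : ℕ} (v : Fin m → Fin M) (a b : Fin m × Fin 2) : ℝ :=
  if a.1 = b.1 then (if a.2 = 0 then 1 else -1)
  else if v a.1 < v b.1 then (if a.2 = 0 then -1 else 1)
  else (if b.2 = 0 then 1 else -1)

lemma ladder_at_left {n : ℕ} (i j : Fin n) (A B : Fin 4) : ladderString i j A B i = A := by
  simp [ladderString]

lemma ladder_at_right {n : ℕ} {i j : Fin n} (h : j ≠ i) (A B : Fin 4) :
    ladderString i j A B j = B := by
  simp [ladderString, h]

lemma ladder_at_mid {n : ℕ} {i j x : Fin n} (h1 : x ≠ i) (h2 : x ≠ j)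
    (h3 : min i j < x) (h4 : x < max i j) (A B : Fin 4) : ladderString i j A B x = 3 := by
  simp only [ladderString, if_neg h1, if_neg h2, if_pos (And.intro h3 h4)]

lemma ladder_at_out {n : ℕ} {i j x : Fin n} (h1 : x ≠ i) (h2 : x ≠ j)
    (h3 : ¬(min i j < x ∧ x < max i j)) (A B : Fin 4) : ladderString i j A B x = 0 := by
  simp only [ladderString, if_neg h1, if_neg h2, if_neg h3]

lemma gStr_at {m M : ℕ} (v : Fin m → Fin M) (k : Fin m) (α : Fin 2) :
    gStr v k α (v k) = ltr α := by simp [gStr]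

lemma gStr_lo {m M : ℕ} (v : Fin m → Fin M) (k : Fin m) (α : Fin 2) {j : Fin M}
    (h : j < v k) : gStr v k α j = 3 := by simp [gStr, ne_of_lt h, h]

lemma gStr_hi {m M : ℕ} (v : Fin m → Fin M) (k : Fin m) (α : Fin 2) {j : Fin M}
    (h1 : j ≠ v k) (h : ¬ j < v k) : gStr v k α j = 0 := by simp [gStr, h1, h]

section Gamma

variable {m M : ℕ} (v : Fin m → Fin M)

lemma gamma_mul_lt {k l : Fin m} (α β : Fin 2) (h : v k < v l) :
    PauliMat (gStr v k α) * PauliMat (gStr v l β) =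
      (if α = 0 then (-1 : ℝ) else 1) •
        (Complex.I • PauliMat (ladderString (v k) (v l) (ltrBar α) (ltr β))) := by
  have hne : v k ≠ v l := ne_of_lt h
  have hmin : min (v k) (v l) = v k := min_eq_left h.le
  have hmax : max (v k) (v l) = v l := max_eq_right h.le
  rw [PauliMat_mul]
  have hstr : (fun i => pmul (gStr v k α i) (gStr v l β i))
      = ladderString (v k) (v l) (ltrBar α) (ltr β) := by
    funext j
    rcases eq_or_ne j (v k) with heq | h1
    · rw [heq, gStr_at, gStr_lo v l β h, ladder_at_left]
      fin_cases α <;> rfl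
    · rcases eq_or_ne j (v l) with heq | h2
      · rw [heq, gStr_hi v k α hne.symm h.asymm, gStr_at, ladder_at_right hne.symm]
        rfl
      · rcases lt_trichotomy j (v k) with h3 | h3 | h3
        · rw [gStr_lo v k α h3, gStr_lo v l β (h3.trans h),
            ladder_at_out h1 h2 (by intro hc; rw [hmin] at hc; exact h3.asymm hc.1)]
          rfl
        · exact absurd h3 h1
        · rcases lt_or_ge j (v l) with h4 | h4
          · rw [gStr_hi v k α h1 h3.asymm, gStr_lo v l β h4,
              ladder_at_mid h1 h2 (by rw [hmin]; exact h3) (by rw [hmax]; exact h4)]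
            rfl
          · rw [gStr_hi v k α h1 h3.asymm, gStr_hi v l β h2 (not_lt.mpr h4),
              ladder_at_out h1 h2 (by intro hc; rw [hmax] at hc; exact (not_lt.mpr h4) hc.2)]
            rfl
  rw [hstr]
  have hcoef : (∏ i, pcoef (gStr v k α i) (gStr v l β i))
      = (if α = 0 then -Complex.I else Complex.I) := by
    rw [Finset.prod_eq_single (v k)]
    · rw [gStr_at, gStr_lo v l β h]
      fin_cases α <;> rfl
    · intro j _ h1
      have hp0 : ∀ b : Fin 4, pcoef 0 b = 1 := by intro b; fin_cases b <;> rfl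
      rcases lt_or_ge j (v k) with h3 | h3
      · rw [gStr_lo v k α h3, gStr_lo v l β (h3.trans h)]; rfl
      · rw [gStr_hi v k α h1 (not_lt.mpr h3)]; exact hp0 _
    · intro hmem; exact absurd (Finset.mem_univ _) hmem
  rw [hcoef]
  by_cases hα : α = 0
  · rw [if_pos hα, if_pos hα, ← smul_assoc]
    norm_num
  · rw [if_neg hα, if_neg hα, one_smul]

lemma gamma_mul_gt {k l : Fin m} (α β : Fin 2) (h : v l < v k) :
    PauliMat (gStr v k α) * PauliMat (gStr v l β) =
      (if β = 0 then (1 : ℝ) else -1) •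
        (Complex.I • PauliMat (ladderString (v k) (v l) (ltr α) (ltrBar β))) := by
  have hne : v l ≠ v k := ne_of_lt h
  have hmin : min (v k) (v l) = v l := min_eq_right h.le
  have hmax : max (v k) (v l) = v k := max_eq_left h.le
  rw [PauliMat_mul]
  have hstr : (fun i => pmul (gStr v k α i) (gStr v l β i))
      = ladderString (v k) (v l) (ltr α) (ltrBar β) := by
    funext j
    rcases eq_or_ne j (v k) with heq | h1
    · rw [heq, gStr_at, gStr_hi v l β hne.symm h.asymm, ladder_at_left]
      fin_cases α <;> rfl
    · rcases eq_or_ne j (v l) with heq | h2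
      · rw [heq, gStr_lo v k α h, gStr_at, ladder_at_right hne]
        fin_cases β <;> rfl
      · rcases lt_trichotomy j (v l) with h3 | h3 | h3
        · rw [gStr_lo v k α (h3.trans h), gStr_lo v l β h3,
            ladder_at_out h1 h2 (by intro hc; rw [hmin] at hc; exact h3.asymm hc.1)]
          rfl
        · exact absurd h3 h2
        · rcases lt_or_ge j (v k) with h4 | h4
          · rw [gStr_lo v k α h4, gStr_hi v l β h2 h3.asymm,
              ladder_at_mid h1 h2 (by rw [hmin]; exact h3) (by rw [hmax]; exact h4)]
            rfl
          · rw [gStr_hi v k α h1 (not_lt.mpr h4), gStr_hi v l β h2 h3.asymm,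
              ladder_at_out h1 h2 (by intro hc; rw [hmax] at hc; exact (not_lt.mpr h4) hc.2)]
            rfl
  rw [hstr]
  have hcoef : (∏ i, pcoef (gStr v k α i) (gStr v l β i))
      = (if β = 0 then Complex.I else -Complex.I) := by
    rw [Finset.prod_eq_single (v l)]
    · rw [gStr_lo v k α h, gStr_at]
      fin_cases β <;> rfl
    · intro j _ h2
      rcases eq_or_ne j (v k) with heq | h1
      · rw [heq, gStr_at, gStr_hi v l β hne.symm h.asymm]
        fin_cases α <;> rfl
      · rcases lt_or_ge j (v l) with h3 | h3
        · rw [gStr_lo v k α (h3.trans h), gStr_lo v l β h3]; rfl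
        · rw [gStr_hi v l β h2 (not_lt.mpr h3)]
          rcases lt_or_ge j (v k) with h4 | h4
          · rw [gStr_lo v k α h4]; rfl
          · rw [gStr_hi v k α h1 (not_lt.mpr h4)]; rfl
    · intro hmem; exact absurd (Finset.mem_univ _) hmem
  rw [hcoef]
  by_cases hβ : β = 0
  · rw [if_pos hβ, if_pos hβ, one_smul]
  · rw [if_neg hβ, if_neg hβ, ← smul_assoc]
    norm_num

lemma gamma_mul_same (k : Fin m) (α β : Fin 2) (hab : α ≠ β) :
    PauliMat (gStr v k α) * PauliMat (gStr v k β) =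
      (if α = 0 then (1 : ℝ) else -1) • (Complex.I • PauliMat (zString (v k))) := by
  rw [PauliMat_mul]
  have hstr : (fun i => pmul (gStr v k α i) (gStr v k β i)) = zString (v k) := by
    funext j
    rcases eq_or_ne j (v k) with heq | h1
    · rw [heq, gStr_at, gStr_at, show zString (v k) (v k) = 3 by simp [zString]]
      fin_cases α <;> fin_cases β <;> first | (exact absurd rfl hab) | rfl
    · rw [show zString (v k) j = 0 by simp [zString, h1]]
      rcases lt_or_ge j (v k) with h3 | h3
      · rw [gStr_lo v k α h3, gStr_lo v k β h3]; rfl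
      · rw [gStr_hi v k α h1 (not_lt.mpr h3), gStr_hi v k β h1 (not_lt.mpr h3)]; rfl
  rw [hstr]
  have hcoef : (∏ i, pcoef (gStr v k α i) (gStr v k β i))
      = (if α = 0 then Complex.I else -Complex.I) := by
    rw [Finset.prod_eq_single (v k)]
    · rw [gStr_at, gStr_at]
      fin_cases α <;> fin_cases β <;> first | (exact absurd rfl hab) | rfl
    · intro j _ h1
      rcases lt_or_ge j (v k) with h3 | h3
      · rw [gStr_lo v k α h3, gStr_lo v k β h3]; rfl
      · rw [gStr_hi v k α h1 (not_lt.mpr h3), gStr_hi v k β h1 (not_lt.mpr h3)]; rfl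
    · intro hmem; exact absurd (Finset.mem_univ _) hmem
  rw [hcoef]
  by_cases hα : α = 0
  · rw [if_pos hα, if_pos hα, one_smul]
  · rw [if_neg hα, if_neg hα, ← smul_assoc]
    norm_num

lemma Gam_sq (a : Fin m × Fin 2) : Gam v a * Gam v a = 1 := by
  rw [Gam, PauliMat_mul]
  have h0 : ∀ x : Fin 4, pmul x x = 0 := by decide
  have hc : ∀ x : Fin 4, pcoef x x = 1 := by intro x; fin_cases x <;> rfl
  have h1 : (fun i => pmul (gStr v a.1 a.2 i) (gStr v a.1 a.2 i))
      = fun _ : Fin M => (0 : Fin 4) := by funext j; exact h0 _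
  rw [h1, PauliMat_one]
  simp [hc]

lemma gamma_mul_pair (hv : Function.Injective v) {a b : Fin m × Fin 2} (hab : a ≠ b) :
    Gam v a * Gam v b = mSgn v a b • (Complex.I • PauliMat (mStr v a b)) := by
  obtain ⟨k, α⟩ := a; obtain ⟨l, β⟩ := b
  by_cases hkl : k = l
  · subst hkl
    have hαβ : α ≠ β := by
      intro hc; exact hab (by rw [hc])
    rw [Gam, Gam]
    rw [gamma_mul_same v k α β hαβ]
    simp [mStr, mSgn]
  · have hvkl : v k ≠ v l := fun hc => hkl (hv hc)
    rcases hvkl.lt_or_gt with h | h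
    · rw [Gam, Gam, gamma_mul_lt v α β h]
      simp [mStr, mSgn, hkl, h]
    · rw [Gam, Gam, gamma_mul_gt v α β h]
      simp [mStr, mSgn, hkl, h, h.asymm]

lemma ladder_swap {n : ℕ} {i j : Fin n} (h : i ≠ j) (A B : Fin 4) :
    ladderString j i B A = ladderString i j A B := by
  funext x
  simp only [ladderString]
  rcases eq_or_ne x i with heq | h1
  · rw [heq]; simp [h, h.symm]
  · rcases eq_or_ne x j with heq | h2
    · rw [heq]; simp [h, h.symm]
    · rw [if_neg h2, if_neg h1, if_neg h1, if_neg h2, min_comm, max_comm]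

lemma mStr_symm (hv : Function.Injective v) (a b : Fin m × Fin 2) :
    mStr v b a = mStr v a b := by
  obtain ⟨k, α⟩ := a; obtain ⟨l, β⟩ := b
  by_cases hkl : k = l
  · subst hkl; simp [mStr]
  · have hvkl : v k ≠ v l := fun hc => hkl (hv hc)
    rcases hvkl.lt_or_gt with h | h <;>
      · simp only [mStr, if_neg hkl, if_neg (Ne.symm hkl), if_pos h, if_neg h.asymm]
        exact ladder_swap hvkl _ _

lemma mSgn_symm (hv : Function.Injective v) {a b : Fin m × Fin 2} (hab : a ≠ b) :
    mSgn v b a = -mSgn v a b := by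
  obtain ⟨k, α⟩ := a; obtain ⟨l, β⟩ := b
  by_cases hkl : k = l
  · subst hkl
    have hαβ : α ≠ β := fun hc => hab (by rw [hc])
    simp only [mSgn, if_pos rfl]
    fin_cases α <;> fin_cases β <;> first | (exact absurd rfl hαβ) | norm_num
  · have hvkl : v k ≠ v l := fun hc => hkl (hv hc)
    rcases hvkl.lt_or_gt with h | h <;>
      · simp only [mSgn, if_neg hkl, if_neg (Ne.symm hkl), if_pos h, if_neg h.asymm]
        split_ifs <;> norm_num

lemma Gam_anticomm (hv : Function.Injective v) {a b : Fin m × Fin 2} (hab : a ≠ b) :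
    Gam v a * Gam v b = -(Gam v b * Gam v a) := by
  rw [gamma_mul_pair v hv hab, gamma_mul_pair v hv (Ne.symm hab), mStr_symm v hv,
    mSgn_symm v hv hab, neg_smul, neg_neg]

lemma Gam_swap' (hv : Function.Injective v) {x y : Fin m × Fin 2} (h : x ≠ y)
    (N : Matrix (Fin M → Fin 2) (Fin M → Fin 2) ℂ) :
    Gam v x * (Gam v y * N) = -(Gam v y * (Gam v x * N)) := by
  rw [← mul_assoc, Gam_anticomm v hv h, neg_mul, mul_assoc]

lemma Gam_sq' (x : Fin m × Fin 2) (N : Matrix (Fin M → Fin 2) (Fin M → Fin 2) ℂ) :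
    Gam v x * (Gam v x * N) = N := by
  rw [← mul_assoc, Gam_sq, one_mul]

end Gamma

/-! ### Membership of Majorana quadratics in the container set -/

section Tmem

variable {m M : ℕ} (v : Fin m → Fin M)

lemma ltr_cases (c : Fin 2) : ltr c = 1 ∨ ltr c = 2 := by fin_cases c <;> simp [ltr]

lemma ltrBar_cases (c : Fin 2) : ltrBar c = 1 ∨ ltrBar c = 2 := by
  fin_cases c <;> simp [ltrBar]

lemma ladder_mem_Tset (hv : Function.Injective v) {k l : Fin m} (hkl : k ≠ l)
    {A B : Fin 4} (hA : A = 1 ∨ A = 2) (hB : B = 1 ∨ B = 2) :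
    ladderString (v k) (v l) A B ∈ Tset v := by
  rcases hA with rfl | rfl <;> rcases hB with rfl | rfl
  · exact Or.inl ⟨k, l, hkl, Or.inl rfl⟩
  · exact Or.inl ⟨k, l, hkl, Or.inr (Or.inr rfl)⟩
  · exact Or.inl ⟨l, k, Ne.symm hkl,
      Or.inr (Or.inr (ladder_swap (fun hc => hkl (hv hc.symm)) 1 2))⟩
  · exact Or.inl ⟨k, l, hkl, Or.inr (Or.inl rfl)⟩

lemma mStr_mem (hv : Function.Injective v) {a b : Fin m × Fin 2} (hab : a ≠ b) :
    mStr v a b ∈ Tset v := by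
  obtain ⟨k, α⟩ := a; obtain ⟨l, β⟩ := b
  by_cases hkl : k = l
  · refine Or.inr ⟨k, ?_⟩
    simp [mStr, hkl]
  · have hvkl : v k ≠ v l := fun hc => hkl (hv hc)
    rcases hvkl.lt_or_gt with h | h
    · simp only [mStr, if_neg hkl, if_pos h]
      exact ladder_mem_Tset v hv hkl (ltrBar_cases α) (ltr_cases β)
    · simp only [mStr, if_neg hkl, if_neg h.asymm]
      exact ladder_mem_Tset v hv hkl (ltr_cases α) (ltrBar_cases β)

lemma mSgn_cases (a b : Fin m × Fin 2) : mSgn v a b = 1 ∨ mSgn v a b = -1 := by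
  unfold mSgn; split_ifs <;> simp

lemma mSgn_mul_self (a b : Fin m × Fin 2) : mSgn v a b * mSgn v a b = 1 := by
  rcases mSgn_cases v a b with h | h <;> rw [h] <;> norm_num

/-- Every generator is a signed Majorana quadratic. -/
lemma gen2 (hv : Function.Injective v) {t : Fin M → Fin 4} (ht : t ∈ Tset v) :
    ∃ a b : Fin m × Fin 2, a ≠ b ∧
      Complex.I • PauliMat t = mSgn v a b • (Gam v a * Gam v b) := by
  have key : ∀ a b : Fin m × Fin 2, a ≠ b → mStr v a b = t →
      Complex.I • PauliMat t = mSgn v a b • (Gam v a * Gam v b) := by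
    intro a b hab hstr
    rw [gamma_mul_pair v hv hab, ← smul_assoc, smul_eq_mul, mSgn_mul_self, one_smul, hstr]
  have hladder : ∀ k l : Fin m, k ≠ l → ∀ A B : Fin 4, A = 1 ∨ A = 2 → B = 1 ∨ B = 2 →
      t = ladderString (v k) (v l) A B →
      ∃ a b : Fin m × Fin 2, a ≠ b ∧
        Complex.I • PauliMat t = mSgn v a b • (Gam v a * Gam v b) := by
    intro k l hkl A B hA hB hts
    have hvkl : v k ≠ v l := fun hc => hkl (hv hc)
    rcases hvkl.lt_or_gt with h | h
    · have hne : ((k, if A = 1 then (1 : Fin 2) else 0) : Fin m × Fin 2)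
          ≠ (l, if B = 1 then 0 else 1) := by
        simp only [ne_eq, Prod.mk.injEq, not_and]
        exact fun hc => absurd hc hkl
      refine ⟨_, _, hne, key _ _ hne ?_⟩
      simp only [mStr, if_neg hkl, if_pos h, hts]
      rcases hA with rfl | rfl <;> rcases hB with rfl | rfl <;> rfl
    · have hne : ((k, if A = 1 then (0 : Fin 2) else 1) : Fin m × Fin 2)
          ≠ (l, if B = 1 then 1 else 0) := by
        simp only [ne_eq, Prod.mk.injEq, not_and]
        exact fun hc => absurd hc hkl
      refine ⟨_, _, hne, key _ _ hne ?_⟩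
      simp only [mStr, if_neg hkl, if_neg h.asymm, hts]
      rcases hA with rfl | rfl <;> rcases hB with rfl | rfl <;> rfl
  rcases ht with ⟨k, l, hkl, hc⟩ | ⟨k, hz⟩
  · rcases hc with hc | hc | hc
    · exact hladder k l hkl 1 1 (Or.inl rfl) (Or.inl rfl) hc
    · exact hladder k l hkl 2 2 (Or.inr rfl) (Or.inr rfl) hc
    · exact hladder k l hkl 1 2 (Or.inl rfl) (Or.inr rfl) hc
  · refine ⟨(k, 0), (k, 1), by simp, key _ _ (by simp) ?_⟩
    simp [mStr, hz]

/-- Classification of brackets of Majorana quadratics. -/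
lemma bracket_quad (hv : Function.Injective v) (a b c d : Fin m × Fin 2)
    (hab : a ≠ b) (hcd : c ≠ d) :
    ⁅Gam v a * Gam v b, Gam v c * Gam v d⁆ = 0 ∨
    ∃ e f, e ≠ f ∧
      (⁅Gam v a * Gam v b, Gam v c * Gam v d⁆ = (2 : ℝ) • (Gam v e * Gam v f) ∨
       ⁅Gam v a * Gam v b, Gam v c * Gam v d⁆ = (-2 : ℝ) • (Gam v e * Gam v f)) := by
  rw [Ring.lie_def]
  by_cases h1 : a = c
  · subst h1
    by_cases h2 : b = d
    · subst h2; left; exact sub_self _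
    · right
      refine ⟨b, d, h2, Or.inr ?_⟩
      have e1 : Gam v a * Gam v b * (Gam v a * Gam v d) = -(Gam v b * Gam v d) := by
        rw [mul_assoc, Gam_swap' v hv (Ne.symm hab), mul_neg, Gam_sq']
      have e2 : Gam v a * Gam v d * (Gam v a * Gam v b) = -(Gam v d * Gam v b) := by
        rw [mul_assoc, Gam_swap' v hv (Ne.symm hcd), mul_neg, Gam_sq']
      rw [e1, e2, Gam_anticomm v hv (Ne.symm h2)]
      module
  · by_cases h2 : a = d
    · subst h2
      by_cases h3 : b = c
      · subst h3
        left
        rw [Gam_anticomm v hv (Ne.symm hab)]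
        simp [mul_neg, neg_mul]
      · right
        refine ⟨b, c, h3, Or.inl ?_⟩
        have e1 : Gam v a * Gam v b * (Gam v c * Gam v a) = Gam v b * Gam v c := by
          rw [mul_assoc, Gam_swap' v hv h3, mul_neg, Gam_anticomm v hv (Ne.symm hab),
            mul_neg, mul_neg, neg_neg, Gam_swap' v hv (Ne.symm h1), mul_neg, Gam_sq',
            Gam_anticomm v hv (Ne.symm h3), neg_neg]
        have e2 : Gam v c * Gam v a * (Gam v a * Gam v b) = Gam v c * Gam v b := by
          rw [mul_assoc, Gam_sq']
        rw [e1, e2, Gam_anticomm v hv (Ne.symm h3)]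
        module
    · by_cases h3 : b = c
      · subst h3
        right
        refine ⟨a, d, h2, Or.inl ?_⟩
        have e1 : Gam v a * Gam v b * (Gam v b * Gam v d) = Gam v a * Gam v d := by
          rw [mul_assoc, Gam_sq']
        have e2 : Gam v b * Gam v d * (Gam v a * Gam v b) = -(Gam v a * Gam v d) := by
          rw [mul_assoc, Gam_swap' v hv (Ne.symm h2), mul_neg,
            Gam_anticomm v hv (Ne.symm hcd), mul_neg, mul_neg, neg_neg,
            Gam_swap' v hv hab, mul_neg, Gam_sq']
        rw [e1, e2]
        module
      · by_cases h4 : b = d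
        · subst h4
          right
          refine ⟨a, c, h1, Or.inr ?_⟩
          have e1 : Gam v a * Gam v b * (Gam v c * Gam v b) = -(Gam v a * Gam v c) := by
            rw [mul_assoc, Gam_swap' v hv h3, mul_neg, Gam_sq, mul_one]
          have e2 : Gam v c * Gam v b * (Gam v a * Gam v b) = Gam v a * Gam v c := by
            rw [mul_assoc, Gam_swap' v hv (Ne.symm hab), mul_neg, Gam_sq, mul_one,
              Gam_anticomm v hv (Ne.symm h1), neg_neg]
          rw [e1, e2]
          module
        · left
          rw [sub_eq_zero]
          simp only [mul_assoc]
          rw [Gam_swap' v hv h3, mul_neg, Gam_swap' v hv h1, neg_neg,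
            Gam_anticomm v hv h4, mul_neg, mul_neg, Gam_swap' v hv h2, mul_neg, neg_neg]

end Tmem

/-! ### Injectivity of the quadratic strings -/

lemma zString_values {n : ℕ} (k x : Fin n) : zString k x = 3 ∨ zString k x = 0 := by
  simp only [zString]; split_ifs <;> simp

lemma ladder_values {n : ℕ} {i j x : Fin n} (h1 : x ≠ i) (h2 : x ≠ j) (A B : Fin 4) :
    ladderString i j A B x = 3 ∨ ladderString i j A B x = 0 := by
  simp only [ladderString, if_neg h1, if_neg h2]; split_ifs <;> simp

lemma ladder_inj {n : ℕ} {x y x' y' : Fin n} {A B A' B' : Fin 4}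
    (hxy : x ≠ y) (hx'y' : x' ≠ y')
    (hA : A = 1 ∨ A = 2) (hB : B = 1 ∨ B = 2)
    (hA' : A' = 1 ∨ A' = 2) (hB' : B' = 1 ∨ B' = 2)
    (h : ladderString x y A B = ladderString x' y' A' B') :
    (x = x' ∧ y = y' ∧ A = A' ∧ B = B') ∨ (x = y' ∧ y = x' ∧ A = B' ∧ B = A') := by
  have hx : x = x' ∨ x = y' := by
    by_contra hc
    push_neg at hc
    have hval := congrFun h x
    rw [ladder_at_left] at hval
    rcases ladder_values hc.1 hc.2 A' B' with h0 | h0 <;> rw [h0] at hval <;>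
      rcases hA with rfl | rfl <;> exact absurd hval (by decide)
  have hy : y = x' ∨ y = y' := by
    by_contra hc
    push_neg at hc
    have hval := congrFun h y
    rw [ladder_at_right (Ne.symm hxy)] at hval
    rcases ladder_values hc.1 hc.2 A' B' with h0 | h0 <;> rw [h0] at hval <;>
      rcases hB with rfl | rfl <;> exact absurd hval (by decide)
  rcases hx with hx | hx
  · left
    have hy' : y = y' := by
      rcases hy with hy | hy
      · exact absurd (hy.trans hx.symm) (Ne.symm hxy)
      · exact hy
    refine ⟨hx, hy', ?_, ?_⟩
    · have hval := congrFun h x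
      rw [ladder_at_left, hx, ladder_at_left] at hval
      exact hval
    · have hval := congrFun h y
      rw [ladder_at_right (Ne.symm hxy), hy', ladder_at_right (Ne.symm hx'y')] at hval
      exact hval
  · right
    have hy' : y = x' := by
      rcases hy with hy | hy
      · exact hy
      · exact absurd (hy.trans hx.symm) (Ne.symm hxy)
    refine ⟨hx, hy', ?_, ?_⟩
    · have hval := congrFun h x
      rw [ladder_at_left, hx, ladder_at_right (Ne.symm hx'y')] at hval
      exact hval
    · have hval := congrFun h y
      rw [ladder_at_right (Ne.symm hxy), hy', ladder_at_left] at hval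
      exact hval

/-- Position of a Majorana index in `Fin (2m)`, as a natural number. -/
def kidx {m : ℕ} (a : Fin m × Fin 2) : ℕ := 2 * a.1.1 + a.2.1

lemma kidx_inj {m : ℕ} : Function.Injective (kidx (m := m)) := by
  rintro ⟨k, α⟩ ⟨l, β⟩ h
  simp only [kidx] at h
  have hα := α.isLt
  have hβ := β.isLt
  have h1 : k.1 = l.1 ∧ α.1 = β.1 := by omega
  simp only [Prod.mk.injEq]
  exact ⟨Fin.ext h1.1, Fin.ext h1.2⟩

lemma ltr_inj : Function.Injective ltr := by decide

lemma ltrBar_inj : Function.Injective ltrBar := by decide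

section Inj

variable {m M : ℕ} (v : Fin m → Fin M)

lemma mStr_inj (hv : Function.Injective v) :
    Function.Injective
      (fun p : {p : (Fin m × Fin 2) × (Fin m × Fin 2) // kidx p.1 < kidx p.2} =>
        mStr v p.1.1 p.1.2) := by
  rintro ⟨⟨⟨k, α⟩, ⟨l, β⟩⟩, hp⟩ ⟨⟨⟨k', α'⟩, ⟨l', β'⟩⟩, hq⟩ h
  simp only at h hp hq
  apply Subtype.ext
  simp only [Prod.mk.injEq]
  by_cases h1 : k = l <;> by_cases h2 : k' = l'
  · -- both z strings
    simp only [mStr, if_pos h1, if_pos h2] at h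
    have hval := congrFun h (v k)
    simp only [zString, if_pos rfl] at hval
    have hkk' : v k = v k' := by
      by_contra hc
      rw [if_neg hc] at hval
      exact absurd hval (by decide)
    have hk : k = k' := hv hkk'
    have hα : α.1 = 0 ∧ β.1 = 1 := by
      subst h1; simp only [kidx] at hp
      have := α.isLt; have := β.isLt; omega
    have hα' : α'.1 = 0 ∧ β'.1 = 1 := by
      subst h2; simp only [kidx] at hq
      have := α'.isLt; have := β'.isLt; omega
    exact ⟨⟨hk, Fin.ext (by omega)⟩, h1.symm.trans (hk.trans h2), Fin.ext (by omega)⟩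
  · -- z vs ladder : impossible
    exfalso
    simp only [mStr, if_pos h1, if_neg h2] at h
    split_ifs at h with h3
    · have hval := congrFun h (v k')
      rw [ladder_at_left] at hval
      rcases zString_values (v k) (v k') with h0 | h0 <;> rw [h0] at hval <;>
        rcases ltrBar_cases α' with h4 | h4 <;> rw [h4] at hval <;>
          exact absurd hval (by decide)
    · have hval := congrFun h (v k')
      rw [ladder_at_left] at hval
      rcases zString_values (v k) (v k') with h0 | h0 <;> rw [h0] at hval <;>
        rcases ltr_cases α' with h4 | h4 <;> rw [h4] at hval <;>
          exact absurd hval (by decide)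
  · -- ladder vs z : impossible
    exfalso
    simp only [mStr, if_neg h1, if_pos h2] at h
    split_ifs at h with h3
    · have hval := congrFun h (v k)
      rw [ladder_at_left] at hval
      rcases zString_values (v k') (v k) with h0 | h0 <;> rw [h0] at hval <;>
        rcases ltrBar_cases α with h4 | h4 <;> rw [h4] at hval <;>
          exact absurd hval (by decide)
    · have hval := congrFun h (v k)
      rw [ladder_at_left] at hval
      rcases zString_values (v k') (v k) with h0 | h0 <;> rw [h0] at hval <;>
        rcases ltr_cases α with h4 | h4 <;> rw [h4] at hval <;>
          exact absurd hval (by decide)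
  · -- ladder vs ladder
    have hvkl : v k ≠ v l := fun hc => h1 (hv hc)
    have hvkl' : v k' ≠ v l' := fun hc => h2 (hv hc)
    simp only [mStr, if_neg h1, if_neg h2] at h
    split_ifs at h with h3 h4 h4
    · -- lt, lt
      rcases ladder_inj hvkl hvkl' (ltrBar_cases α) (ltr_cases β)
        (ltrBar_cases α') (ltr_cases β') h with
        ⟨e1, e2, e3, e4⟩ | ⟨e1, e2, e3, e4⟩
      · exact ⟨⟨hv e1, ltrBar_inj e3⟩, hv e2, ltr_inj e4⟩
      · exfalso
        rw [← e2, ← e1] at h4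
        exact absurd h4 (lt_asymm h3)
    · -- lt, gt
      have hgt : v l' < v k' := (not_lt.mp h4).lt_of_ne (Ne.symm hvkl')
      rcases ladder_inj hvkl hvkl' (ltrBar_cases α) (ltr_cases β)
        (ltr_cases α') (ltrBar_cases β') h with
        ⟨e1, e2, e3, e4⟩ | ⟨e1, e2, e3, e4⟩
      · exfalso
        rw [← e1, ← e2] at hgt
        exact absurd hgt (lt_asymm h3)
      · exfalso
        obtain rfl : k = l' := hv e1
        obtain rfl : l = k' := hv e2
        obtain rfl : α = β' := ltrBar_inj e3
        obtain rfl : β = α' := ltr_inj e4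
        exact absurd hq (lt_asymm hp)
    · -- gt, lt
      have hgt : v l < v k := (not_lt.mp h3).lt_of_ne (Ne.symm hvkl)
      rcases ladder_inj hvkl hvkl' (ltr_cases α) (ltrBar_cases β)
        (ltrBar_cases α') (ltr_cases β') h with
        ⟨e1, e2, e3, e4⟩ | ⟨e1, e2, e3, e4⟩
      · exfalso
        rw [← e1, ← e2] at h4
        exact absurd h4 (lt_asymm hgt)
      · exfalso
        obtain rfl : k = l' := hv e1
        obtain rfl : l = k' := hv e2
        obtain rfl : α = β' := ltr_inj e3
        obtain rfl : β = α' := ltrBar_inj e4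
        exact absurd hq (lt_asymm hp)
    · -- gt, gt
      have hgt : v l < v k := (not_lt.mp h3).lt_of_ne (Ne.symm hvkl)
      rcases ladder_inj hvkl hvkl' (ltr_cases α) (ltrBar_cases β)
        (ltr_cases α') (ltrBar_cases β') h with
        ⟨e1, e2, e3, e4⟩ | ⟨e1, e2, e3, e4⟩
      · exact ⟨⟨hv e1, ltr_inj e3⟩, hv e2, ltrBar_inj e4⟩
      · exfalso
        have hgt' : v l' < v k' := (not_lt.mp h4).lt_of_ne (Ne.symm hvkl')
        rw [← e2, ← e1] at hgt'
        exact absurd hgt' (lt_asymm hgt)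

end Inj

/-! ### Counting -/

lemma card_pairs (m : ℕ) :
    Fintype.card {p : (Fin m × Fin 2) × (Fin m × Fin 2) // kidx p.1 < kidx p.2} =
      m * (2 * m - 1) := by
  classical
  rw [Fintype.card_subtype]
  have hAcard : Fintype.card (Fin m × Fin 2) = 2 * m := by
    simp [Fintype.card_prod, mul_comm]
  -- lt-count equals gt-count via swap
  have hswap : (Finset.univ.filter
        fun p : (Fin m × Fin 2) × (Fin m × Fin 2) => kidx p.1 < kidx p.2).card
      = (Finset.univ.filter
        fun p : (Fin m × Fin 2) × (Fin m × Fin 2) => kidx p.2 < kidx p.1).card := by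
    apply Finset.card_bij' (fun p _ => p.swap) (fun p _ => p.swap)
    · intro p _; exact Prod.swap_swap p
    · intro p _; exact Prod.swap_swap p
    · intro p hp
      simp only [Finset.mem_filter, Finset.mem_univ, true_and] at hp ⊢
      exact hp
    · intro p hp
      simp only [Finset.mem_filter, Finset.mem_univ, true_and] at hp ⊢
      exact hp
  have hunion : (Finset.univ.filter
        fun p : (Fin m × Fin 2) × (Fin m × Fin 2) => kidx p.1 < kidx p.2)
      ∪ (Finset.univ.filter
        fun p : (Fin m × Fin 2) × (Fin m × Fin 2) => kidx p.2 < kidx p.1)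
      = (Finset.univ.filter
        fun p : (Fin m × Fin 2) × (Fin m × Fin 2) => ¬ p.1 = p.2) := by
    ext p
    simp only [Finset.mem_union, Finset.mem_filter, Finset.mem_univ, true_and]
    constructor
    · rintro (h | h) hc <;> rw [hc] at h <;> exact lt_irrefl _ h
    · intro hc
      rcases lt_trichotomy (kidx p.1) (kidx p.2) with h | h | h
      · exact Or.inl h
      · exact absurd (kidx_inj h) hc
      · exact Or.inr h
  have hdisj : Disjoint (Finset.univ.filter
        fun p : (Fin m × Fin 2) × (Fin m × Fin 2) => kidx p.1 < kidx p.2)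
      (Finset.univ.filter
        fun p : (Fin m × Fin 2) × (Fin m × Fin 2) => kidx p.2 < kidx p.1) := by
    rw [Finset.disjoint_left]
    intro p hp hq
    simp only [Finset.mem_filter, Finset.mem_univ, true_and] at hp hq
    exact lt_asymm hp hq
  have hsum := Finset.card_union_of_disjoint hdisj
  rw [hunion] at hsum
  have hdiag : (Finset.univ.filter
        fun p : (Fin m × Fin 2) × (Fin m × Fin 2) => p.1 = p.2).card = 2 * m := by
    rw [← hAcard, ← Finset.card_univ]
    apply Finset.card_bij (fun (p : (Fin m × Fin 2) × (Fin m × Fin 2)) _ => p.1)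
    · intro p _; exact Finset.mem_univ _
    · intro p hp q hq hpq
      simp only [Finset.mem_filter, Finset.mem_univ, true_and] at hp hq
      exact Prod.ext hpq (by rw [← hp, ← hq, hpq])
    · intro a _
      exact ⟨(a, a), Finset.mem_filter.mpr ⟨Finset.mem_univ _, rfl⟩, rfl⟩
  have htot := Finset.card_filter_add_card_filter_not
    (s := (Finset.univ : Finset ((Fin m × Fin 2) × (Fin m × Fin 2))))
    (p := fun p => p.1 = p.2)
  rw [hdiag, Finset.card_univ, Fintype.card_prod, hAcard] at htot
  -- htot : 2 * m + card(ne) = (2m) * (2m)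
  have key : 2 * ((Finset.univ.filter
        fun p : (Fin m × Fin 2) × (Fin m × Fin 2) => kidx p.1 < kidx p.2).card)
      = 2 * (m * (2 * m - 1)) := by
    have harith : 2 * m + 2 * (m * (2 * m - 1)) = 2 * m * (2 * m) := by
      rcases Nat.eq_zero_or_pos m with rfl | hm
      · rfl
      · have h1 : 2 * m - 1 + 1 = 2 * m := by omega
        nlinarith [h1]
    have hlhs : 2 * ((Finset.univ.filter
        fun p : (Fin m × Fin 2) × (Fin m × Fin 2) => kidx p.1 < kidx p.2).card)
        = (Finset.univ.filter
        fun p : (Fin m × Fin 2) × (Fin m × Fin 2) => ¬ p.1 = p.2).card := by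
      rw [hsum, ← hswap]; ring
    omega
  omega

/-! ### Span equality and linear independence -/

section Main

variable {m M : ℕ} (v : Fin m → Fin M)

lemma Gfam_indep (hv : Function.Injective v) :
    LinearIndependent ℝ
      (fun p : {p : (Fin m × Fin 2) × (Fin m × Fin 2) // kidx p.1 < kidx p.2} =>
        Gam v p.1.1 * Gam v p.1.2) := by
  have base := (pauliIndep M).comp _ (mStr_inj v hv)
  have hunits := base.units_smul
    (fun p : {p : (Fin m × Fin 2) × (Fin m × Fin 2) // kidx p.1 < kidx p.2} =>
      if mSgn v p.1.1 p.1.2 = 1 then (1 : ℝˣ) else (-1 : ℝˣ))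
  have hfun : (fun p : {p : (Fin m × Fin 2) × (Fin m × Fin 2) // kidx p.1 < kidx p.2} =>
        Gam v p.1.1 * Gam v p.1.2)
      = (fun p : {p : (Fin m × Fin 2) × (Fin m × Fin 2) // kidx p.1 < kidx p.2} =>
          if mSgn v p.1.1 p.1.2 = 1 then (1 : ℝˣ) else (-1 : ℝˣ)) •
        ((fun t => Complex.I • PauliMat t) ∘
          (fun p : {p : (Fin m × Fin 2) × (Fin m × Fin 2) // kidx p.1 < kidx p.2} =>
            mStr v p.1.1 p.1.2)) := by
    funext p
    have hab : p.1.1 ≠ p.1.2 := fun hc => absurd (hc ▸ p.2) (lt_irrefl _)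
    show Gam v p.1.1 * Gam v p.1.2
        = (if mSgn v p.1.1 p.1.2 = 1 then (1 : ℝˣ) else (-1 : ℝˣ)) •
          (Complex.I • PauliMat (mStr v p.1.1 p.1.2))
    rw [gamma_mul_pair v hv hab]
    rcases mSgn_cases v p.1.1 p.1.2 with hs | hs
    · rw [hs, if_pos rfl, one_smul, one_smul]
    · rw [hs, if_neg (by norm_num), Units.smul_def]
      norm_num
  rw [hfun]
  exact hunits

lemma span_eq_range (hv : Function.Injective v) :
    Submodule.span ℝ ((fun p => Complex.I • PauliMat p) '' Tset v)
      = Submodule.span ℝ (Set.range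
        (fun p : {p : (Fin m × Fin 2) × (Fin m × Fin 2) // kidx p.1 < kidx p.2} =>
          Gam v p.1.1 * Gam v p.1.2)) := by
  apply le_antisymm <;> rw [Submodule.span_le]
  · rintro x ⟨t, ht, rfl⟩
    obtain ⟨a, b, hab, heq⟩ := gen2 v hv ht
    change Complex.I • PauliMat t ∈ _
    rw [heq]
    apply Submodule.smul_mem
    rcases lt_trichotomy (kidx a) (kidx b) with h | h | h
    · exact Submodule.subset_span ⟨⟨(a, b), h⟩, rfl⟩
    · exact absurd (kidx_inj h) hab
    · rw [Gam_anticomm v hv hab]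
      exact Submodule.neg_mem _ (Submodule.subset_span ⟨⟨(b, a), h⟩, rfl⟩)
  · rintro x ⟨p, rfl⟩
    have hab : p.1.1 ≠ p.1.2 := fun hc => absurd (hc ▸ p.2) (lt_irrefl _)
    change Gam v p.1.1 * Gam v p.1.2 ∈ _
    rw [gamma_mul_pair v hv hab]
    exact Submodule.smul_mem _ _
      (Submodule.subset_span ⟨_, mStr_mem v hv hab, rfl⟩)

end Main

/-- The ℝ-span of `{I • P(t) : t ∈ T_v}` is closed under the commutator bracket and
has dimension `m(2m − 1)`. -/
theorem glarge_closed_and_finrank (m M : ℕ) (hm : 1 ≤ m) (v : Fin m → Fin M)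
    (hv : Function.Injective v) :
    (∀ x ∈ Submodule.span ℝ ((fun p => Complex.I • PauliMat p) '' Tset v),
      ∀ y ∈ Submodule.span ℝ ((fun p => Complex.I • PauliMat p) '' Tset v),
        ⁅x, y⁆ ∈ Submodule.span ℝ ((fun p => Complex.I • PauliMat p) '' Tset v)) ∧
    Module.finrank ℝ
      (Submodule.span ℝ ((fun p => Complex.I • PauliMat p) '' Tset v)) =
      m * (2 * m - 1) := by
  constructor
  · -- closure under the bracket
    have hgen : ∀ s ∈ Tset v, ∀ t ∈ Tset v,
        ⁅Complex.I • PauliMat s, Complex.I • PauliMat t⁆ ∈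
          Submodule.span ℝ ((fun p => Complex.I • PauliMat p) '' Tset v) := by
      intro s hs t ht
      obtain ⟨a, b, hab, hxe⟩ := gen2 v hv hs
      obtain ⟨c, d, hcd, hye⟩ := gen2 v hv ht
      rw [hxe, hye, smul_lie, lie_smul]
      apply Submodule.smul_mem
      apply Submodule.smul_mem
      rcases bracket_quad v hv a b c d hab hcd with h0 | ⟨e, f, hef, hfin⟩
      · rw [h0]; exact Submodule.zero_mem _
      · have hq := gamma_mul_pair v hv hef
        rcases hfin with h2 | h2 <;> rw [h2, hq] <;>
          exact Submodule.smul_mem _ _ (Submodule.smul_mem _ _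
            (Submodule.subset_span ⟨_, mStr_mem v hv hef, rfl⟩))
    intro x hx y hy
    induction hx using Submodule.span_induction with
    | mem a ha =>
      induction hy using Submodule.span_induction with
      | mem b hb =>
        obtain ⟨s, hs, rfl⟩ := ha
        obtain ⟨t, ht, rfl⟩ := hb
        exact hgen s hs t ht
      | zero => rw [lie_zero]; exact Submodule.zero_mem _
      | add y z hy hz ihy ihz => rw [lie_add]; exact Submodule.add_mem _ ihy ihz
      | smul c y hy ih => rw [lie_smul]; exact Submodule.smul_mem _ c ih
    | zero => rw [zero_lie]; exact Submodule.zero_mem _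
    | add x₁ x₂ h₁ h₂ ih₁ ih₂ => rw [add_lie]; exact Submodule.add_mem _ ih₁ ih₂
    | smul c x hx ih => rw [smul_lie]; exact Submodule.smul_mem _ c ih
  · rw [span_eq_range v hv, finrank_span_eq_card (Gfam_indep v hv), card_pairs m]
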